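/- Let R be a commutative ring and M a finitely generated R-module. Then M is a Noetherian R-module if and only if for every prime ideal 𝔭 of R with Ann_R(M) ⊆ 𝔭, there exists a finitely generated submodule N^𝔭 of M such that 𝔭M ⊆ N^𝔭 ⊆ M(𝔭), where M(𝔭) = {x ∈ M | tx ∈ 𝔭M for some t ∈ R \ 𝔭}. -/

import Mathlib

open Submodule

section Aux

variable {R M : Type*} [CommRing R] [AddCommGroup M] [Module R M]

/-- Key technical lemma: if every submodule strictly above `N` is finitely generated,
`t • m ∉ N` for some `m`, and some `x ∉ N` satisfies `t • x ∈ N`, then `N` is f.g. -/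
lemma cohen_aux (N : Submodule R M) (hmax : ∀ N' : Submodule R M, N < N' → N'.FG)
    (t : R) (ht : ∃ m : M, t • m ∉ N) (hx : ∃ x : M, x ∉ N ∧ t • x ∈ N) : N.FG := by
  obtain ⟨m₀, hm₀⟩ := ht
  obtain ⟨x₀, hx₀, htx₀⟩ := hx
  set A : Submodule R M := N ⊔ Submodule.map (LinearMap.lsmul R M t) ⊤ with hA
  have hNA : N < A := by
    refine lt_of_le_of_ne le_sup_left fun h => hm₀ ?_
    have : t • m₀ ∈ A := Submodule.mem_sup_right (Submodule.mem_map_of_mem trivial)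
    rwa [← h] at this
  obtain ⟨s, hs⟩ := hmax A hNA
  set B : Submodule R M := N.comap (LinearMap.lsmul R M t) with hB
  have hNB : N < B := by
    refine lt_of_le_of_ne (fun z hz => ?_) fun h => hx₀ ?_
    · exact N.smul_mem t hz
    · have : x₀ ∈ B := htx₀
      rwa [← h] at this
  obtain ⟨sB, hsB⟩ := hmax B hNB
  -- decompose generators of A
  have hgen : ∀ g : M, ∃ nv : M × M, g ∈ (s : Set M) →
      nv.1 ∈ N ∧ g = nv.1 + t • nv.2 := by
    intro g
    by_cases hg : g ∈ (s : Set M)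
    · have hgA : g ∈ A := by
        rw [← hs]; exact subset_span hg
      rw [hA] at hgA
      obtain ⟨n, hn, w, hw, hnw⟩ := Submodule.mem_sup.mp hgA
      obtain ⟨v, -, hv⟩ := hw
      exact ⟨(n, v), fun _ => ⟨hn, by rw [← hnw, ← hv]; simp⟩⟩
    · exact ⟨(0, 0), fun h => absurd h hg⟩
  choose f hf using hgen
  set ns : Set M := (fun g => (f g).1) '' ↑s with hns
  set C : Submodule R M := span R ns ⊔ Submodule.map (LinearMap.lsmul R M t) B with hC
  have hCN : C ≤ N := by
    refine sup_le (span_le.mpr ?_) ?_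
    · rintro z ⟨g, hg, rfl⟩
      exact (hf g hg).1
    · rintro z ⟨v, hv, rfl⟩
      simpa [hB] using hv
  have hNC : N ≤ C := by
    intro x hxN
    have hxA : x ∈ span R (s : Set M) := by rw [hs]; exact Submodule.mem_sup_left hxN
    have hsub : span R (s : Set M) ≤ span R ns ⊔ Submodule.map (LinearMap.lsmul R M t) ⊤ := by
      refine span_le.mpr fun g hg => ?_
      obtain ⟨hn, hgeq⟩ := hf g hg
      rw [hgeq]
      exact Submodule.add_mem _ (Submodule.mem_sup_left (subset_span ⟨g, hg, rfl⟩))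
        (Submodule.mem_sup_right ⟨(f g).2, trivial, by simp⟩)
    obtain ⟨u, hu, w, hw, huw⟩ := Submodule.mem_sup.mp (hsub hxA)
    obtain ⟨v, -, hv⟩ := hw
    have huN : u ∈ N := hCN (Submodule.mem_sup_left hu)
    have hwN : w ∈ N := by
      have : w = x - u := by rw [← huw]; abel
      rw [this]; exact N.sub_mem hxN huN
    have hvB : v ∈ B := by
      rw [hB]; simpa [hv] using hwN
    have hwC : w ∈ C := Submodule.mem_sup_right ⟨v, hvB, hv⟩
    rw [← huw]
    exact C.add_mem (Submodule.mem_sup_left hu) hwC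
  have hNeq : N = C := le_antisymm hNC hCN
  rw [hNeq]
  exact Submodule.FG.sup (fg_span (Set.Finite.image _ s.finite_toSet))
    (Submodule.FG.map _ ⟨sB, hsB⟩)

end Aux

theorem noetherian_iff_cohen_condition
    {R M : Type*} [CommRing R] [AddCommGroup M] [Module R M]
    (hfg : Module.Finite R M) :
    IsNoetherian R M ↔
    (∀ p : Ideal R, p.IsPrime → (∀ r : R, (∀ m : M, r • m = 0) → r ∈ p) →
      ∃ N : Submodule R M, N.FG ∧ p • (⊤ : Submodule R M) ≤ N ∧
        ∀ x ∈ N, ∃ t : R, t ∉ p ∧ t • x ∈ p • (⊤ : Submodule R M)) := by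
  constructor
  · intro hNoeth p hp _
    refine ⟨p • ⊤, IsNoetherian.noetherian _, le_rfl, fun x hx => ⟨1, ?_, by simpa using hx⟩⟩
    intro h1
    exact hp.ne_top ((Ideal.eq_top_iff_one p).mpr h1)
  · intro h
    rw [isNoetherian_def]
    by_contra hnot
    push_neg at hnot
    obtain ⟨N₁, hN₁⟩ := hnot
    -- Zorn: a maximal non-f.g. submodule exists
    have hzorn : ∃ N : Submodule R M, N₁ ≤ N ∧ Maximal (· ∈ {P : Submodule R M | ¬ P.FG}) N := by
      refine zorn_le_nonempty₀ _ (fun c hcS hchain y hyc => ?_) N₁ hN₁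
      refine ⟨sSup c, ?_, fun z hz => le_sSup hz⟩
      intro hFG
      obtain ⟨s, hs⟩ := hFG
      have hdir : DirectedOn (· ≤ ·) c := hchain.directedOn
      have hne : c.Nonempty := ⟨y, hyc⟩
      -- find a single member of the chain containing all the generators
      classical
      have key : ∀ fs : Finset M, (↑fs : Set M) ⊆ ((sSup c : Submodule R M) : Set M) →
          ∃ P ∈ c, (↑fs : Set M) ⊆ (P : Set M) := by
        intro fs
        induction fs using Finset.induction_on with
        | empty => exact fun _ => ⟨y, hyc, by simp⟩
        | @insert a fs ha ih =>
          intro hsub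
          have hafs : (↑fs : Set M) ⊆ ((sSup c : Submodule R M) : Set M) := by
            refine subset_trans ?_ hsub
            simp only [Finset.coe_insert, Set.subset_def, Set.mem_insert_iff]
            exact fun x hx => Or.inr hx
          obtain ⟨P, hPc, hP⟩ := ih hafs
          have haX : a ∈ sSup c := hsub (by simp)
          obtain ⟨Q, hQc, hQ⟩ := (Submodule.mem_sSup_of_directed hne hdir).mp haX
          obtain ⟨W, hWc, hPW, hQW⟩ := hdir P hPc Q hQc
          refine ⟨W, hWc, ?_⟩
          intro z hz
          rcases Finset.mem_insert.mp hz with rfl | hz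
          · exact hQW hQ
          · exact hPW (hP hz)
      obtain ⟨P, hPc, hP⟩ := key s (by rw [← hs]; exact subset_span)
      have : sSup c ≤ P := by rw [← hs]; exact span_le.mpr hP
      have hPeq : P = sSup c := le_antisymm (le_sSup hPc) this
      exact hcS hPc (by rw [hPeq]; exact ⟨s, hs⟩)
    obtain ⟨N, -, hNmax⟩ := hzorn
    have hNnfg : ¬ N.FG := hNmax.prop
    have hmax : ∀ N' : Submodule R M, N < N' → N'.FG := by
      intro N' hlt
      by_contra hN'
      exact hlt.ne (le_antisymm hlt.le (hNmax.le_of_ge hN' hlt.le))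
    have htopfg : (⊤ : Submodule R M).FG := Module.finite_def.mp hfg
    -- the ideal p = (N : M)
    set p : Ideal R := N.colon ⊤ with hpdef
    have hmemp : ∀ r : R, r ∈ p ↔ ∀ m : M, r • m ∈ N := by
      intro r
      rw [hpdef, Submodule.mem_colon]
      exact ⟨fun h m => h m trivial, fun h m _ => h m⟩
    have hnotp : ∀ r : R, r ∉ p → ∃ m : M, r • m ∉ N := by
      intro r hr
      by_contra hc
      push_neg at hc
      exact hr ((hmemp r).mpr hc)
    have hptop : p • (⊤ : Submodule R M) ≤ N := by
      refine Submodule.smul_le.mpr fun r hr m _ => (hmemp r).mp hr m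
    have hp : p.IsPrime := by
      constructor
      · intro htop
        have h1 : (1 : R) ∈ p := htop ▸ trivial
        have : N = ⊤ := by
          rw [eq_top_iff]
          intro m _
          simpa using (hmemp 1).mp h1 m
        exact hNnfg (this ▸ htopfg)
      · intro a b hab
        by_contra hcon
        push_neg at hcon
        obtain ⟨ha, hb⟩ := hcon
        obtain ⟨ma, hma⟩ := hnotp a ha
        obtain ⟨mb, hmb⟩ := hnotp b hb
        refine hNnfg (cohen_aux N hmax a ⟨ma, hma⟩ ⟨b • mb, hmb, ?_⟩)
        have : a • b • mb = (a * b) • mb := by rw [mul_smul]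
        rw [this]
        exact (hmemp _).mp hab mb
    have hann : ∀ r : R, (∀ m : M, r • m = 0) → r ∈ p := by
      intro r hr
      exact (hmemp r).mpr fun m => by rw [hr m]; exact N.zero_mem
    obtain ⟨N₀, hN₀fg, hple, hsat⟩ := h p hp hann
    -- N₀ ≤ N
    have hN₀N : N₀ ≤ N := by
      intro x hx
      obtain ⟨t, htp, htx⟩ := hsat x hx
      by_contra hxN
      exact hNnfg (cohen_aux N hmax t (hnotp t htp) ⟨x, hxN, hptop htx⟩)
    -- pick y ∉ N
    have hNne : N ≠ ⊤ := fun hEq => hNnfg (hEq ▸ htopfg)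
    obtain ⟨y, hy⟩ : ∃ y : M, y ∉ N := by
      by_contra hc
      push_neg at hc
      exact hNne (eq_top_iff.mpr fun m _ => hc m)
    set A : Submodule R M := N ⊔ span R {y} with hAdef
    have hNA : N < A := by
      refine lt_of_le_of_ne le_sup_left fun hEq => hy ?_
      have : y ∈ A := Submodule.mem_sup_right (subset_span rfl)
      rwa [← hEq] at this
    obtain ⟨s, hs⟩ := hmax A hNA
    have hgen : ∀ g : M, ∃ nc : M × R, g ∈ (s : Set M) →
        nc.1 ∈ N ∧ g = nc.1 + nc.2 • y := by
      intro g
      by_cases hg : g ∈ (s : Set M)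
      · have hgA : g ∈ A := by rw [← hs]; exact subset_span hg
        rw [hAdef] at hgA
        obtain ⟨n, hn, w, hw, hnw⟩ := Submodule.mem_sup.mp hgA
        obtain ⟨cw, hcw⟩ := Submodule.mem_span_singleton.mp hw
        exact ⟨(n, cw), fun _ => ⟨hn, by rw [← hnw, hcw]⟩⟩
      · exact ⟨(0, 0), fun h => absurd h hg⟩
    choose f hf using hgen
    set ns : Set M := (fun g => (f g).1) '' ↑s with hns
    have hfinal : N = span R ns ⊔ N₀ := by
      refine le_antisymm ?_ (sup_le (span_le.mpr ?_) hN₀N)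
      · intro x hxN
        have hxA : x ∈ span R (s : Set M) := by rw [hs]; exact Submodule.mem_sup_left hxN
        have hsub : span R (s : Set M) ≤ span R ns ⊔ span R {y} := by
          refine span_le.mpr fun g hg => ?_
          obtain ⟨hn, hgeq⟩ := hf g hg
          rw [hgeq]
          exact Submodule.add_mem _ (Submodule.mem_sup_left (subset_span ⟨g, hg, rfl⟩))
            (Submodule.mem_sup_right (Submodule.smul_mem _ _ (subset_span rfl)))
        obtain ⟨u, hu, w, hw, huw⟩ := Submodule.mem_sup.mp (hsub hxA)
        obtain ⟨c, hc⟩ := Submodule.mem_span_singleton.mp hw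
        have huN : u ∈ N := by
          revert hu
          refine fun hu => span_le.mpr ?_ hu
          rintro z ⟨g, hg, rfl⟩
          exact (hf g hg).1
        have hwN : w ∈ N := by
          have : w = x - u := by rw [← huw]; abel
          rw [this]; exact N.sub_mem hxN huN
        have hcp : c ∈ p := by
          by_contra hcnp
          refine hNnfg (cohen_aux N hmax c (hnotp c hcnp) ⟨y, hy, ?_⟩)
          rw [hc]; exact hwN
        have hwN₀ : w ∈ N₀ := by
          rw [← hc]
          exact hple (Submodule.smul_mem_smul hcp trivial)
        rw [← huw]
        exact Submodule.add_mem _ (Submodule.mem_sup_left hu) (Submodule.mem_sup_right hwN₀)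
      · rintro z ⟨g, hg, rfl⟩
        exact (hf g hg).1
    exact hNnfg (hfinal ▸ Submodule.FG.sup (fg_span (Set.Finite.image _ s.finite_toSet)) hN₀fg)
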